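/- For d ≥ 2 and i with m_i ≤ λ < m_{i-1} where m_i = (d/(i+1))^{1/i} − 1 (and m_0 = ∞), the quantities y*_0 = λ(1+(i+1)λ)/D, y*_i = (1+λ)((i+1)(1+λ)^i − d)/D, y*_{i+1} = (1+λ)^2(d − i(1+λ)^{i-1})/D with D = (1+λ)^{i+1} + λ(d+1+(d+i+1)λ) are all nonnegative and satisfy y*_0 + y*_i + y*_{i+1} = 1. -/

import Mathlib

theorem stmt_13 (d i : ℕ) (hd : 2 ≤ d) (hi : 1 ≤ i) (hid : i ≤ d - 1) (lam : ℝ)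
    (hlow : ((d : ℝ) / ((i : ℝ) + 1)) ^ ((1 : ℝ) / (i : ℝ)) - 1 ≤ lam)
    (hhigh : 1 < i → lam < ((d : ℝ) / (i : ℝ)) ^ ((1 : ℝ) / ((i : ℝ) - 1)) - 1)
    (D y0 yi yi1 : ℝ)
    (hD : D = (1 + lam) ^ (i + 1) + lam * ((d : ℝ) + 1 + ((d : ℝ) + (i : ℝ) + 1) * lam))
    (h0 : y0 = lam * (1 + ((i : ℝ) + 1) * lam) / D)
    (h1 : yi = (1 + lam) * (((i : ℝ) + 1) * (1 + lam) ^ i - (d : ℝ)) / D)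
    (h2 : yi1 = (1 + lam) ^ 2 * ((d : ℝ) - (i : ℝ) * (1 + lam) ^ (i - 1)) / D) :
    0 ≤ y0 ∧ 0 ≤ yi ∧ 0 ≤ yi1 ∧ y0 + yi + yi1 = 1 := by
  have hid' : i + 1 ≤ d := by omega
  have hi1 : (1 : ℝ) ≤ (i : ℝ) := by exact_mod_cast hi
  have hip : (0 : ℝ) < (i : ℝ) := by linarith
  have hdi : (i : ℝ) + 1 ≤ (d : ℝ) := by exact_mod_cast hid'
  have hbase : (1 : ℝ) ≤ (d : ℝ) / ((i : ℝ) + 1) := by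
    rw [le_div_iff₀ (by linarith)]; linarith
  have hr1 : (1 : ℝ) ≤ ((d : ℝ) / ((i : ℝ) + 1)) ^ ((1 : ℝ) / (i : ℝ)) :=
    Real.one_le_rpow hbase (by positivity)
  have hlam0 : 0 ≤ lam := by linarith
  -- key: (1+lam)^i ≥ d/(i+1)
  have hrpow : (((d : ℝ) / ((i : ℝ) + 1)) ^ ((1 : ℝ) / (i : ℝ))) ^ i
      = (d : ℝ) / ((i : ℝ) + 1) := by
    rw [← Real.rpow_natCast (((d : ℝ) / ((i : ℝ) + 1)) ^ ((1 : ℝ) / (i : ℝ))) i,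
      ← Real.rpow_mul (by positivity), one_div, inv_mul_cancel₀ (ne_of_gt hip),
      Real.rpow_one]
  have hkey : (d : ℝ) / ((i : ℝ) + 1) ≤ (1 + lam) ^ i := by
    rw [← hrpow]
    exact pow_le_pow_left₀ (by positivity) (by linarith) i
  have hkey' : (d : ℝ) ≤ ((i : ℝ) + 1) * (1 + lam) ^ i := by
    rw [div_le_iff₀ (by linarith)] at hkey; linarith
  -- key: i*(1+lam)^(i-1) ≤ d
  have hkey2 : (i : ℝ) * (1 + lam) ^ (i - 1) ≤ (d : ℝ) := by
    rcases eq_or_lt_of_le hi with h | h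
    · simp [← h]; linarith
    · have hii := hhigh h
      have hi1' : (1 : ℝ) < (i : ℝ) := by exact_mod_cast h
      have hb2 : (0 : ℝ) < (d : ℝ) / (i : ℝ) := by positivity
      have hr2 : (((d : ℝ) / (i : ℝ)) ^ ((1 : ℝ) / ((i : ℝ) - 1))) ^ (i - 1)
          = (d : ℝ) / (i : ℝ) := by
        rw [← Real.rpow_natCast _ (i - 1), ← Real.rpow_mul (le_of_lt hb2)]
        have : ((i - 1 : ℕ) : ℝ) = (i : ℝ) - 1 := by
          push_cast [Nat.cast_sub hi]; ring
        rw [this, one_div, inv_mul_cancel₀ (by linarith), Real.rpow_one]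
      have hlt : (1 + lam) ^ (i - 1) ≤ (d : ℝ) / (i : ℝ) := by
        rw [← hr2]
        exact pow_le_pow_left₀ (by linarith) (by linarith) (i - 1)
      rw [le_div_iff₀ hip] at hlt
      linarith [hlt]
  have hone : (1 : ℝ) ≤ (1 + lam) ^ (i + 1) := one_le_pow₀ (by linarith)
  have hDpos : 0 < D := by
    rw [hD]
    have : 0 ≤ lam * ((d : ℝ) + 1 + ((d : ℝ) + (i : ℝ) + 1) * lam) := by positivity
    linarith
  obtain ⟨k, rfl⟩ : ∃ k, i = k + 1 := ⟨i - 1, by omega⟩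
  refine ⟨?_, ?_, ?_, ?_⟩
  · rw [h0]; positivity
  · rw [h1]
    apply div_nonneg _ (le_of_lt hDpos)
    push_cast at hkey' ⊢
    nlinarith
  · rw [h2]
    apply div_nonneg _ (le_of_lt hDpos)
    simp only [Nat.add_sub_cancel] at hkey2 ⊢
    push_cast at hkey2 ⊢
    nlinarith
  · rw [h0, h1, h2, ← add_div, ← add_div, div_eq_one_iff_eq (ne_of_gt hDpos), hD]
    simp only [Nat.add_sub_cancel]
    push_cast
    ring
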